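/- Suppose the target position is p_T(t) = b₀ + b₁t + ... + b_n tⁿ and the observer position is p_o(t) = c₀ + c₁t + ... + c_n tⁿ + h(t) where h is a polynomial-type function with h^{(i)}(0) = 0 for i = 0,...,n, and p_T(t) ≠ p_o(t) for all t. Then the pair (relative trajectory s(t) = p_T(t) − p_o(t), scale ℓ > 0) is uniquely determined by the functions g(t) = s(t)/‖s(t)‖ and θ(t) = ℓ/‖s(t)‖ (together with h(t)) if and only if h ≢ 0. -/

import Mathlib

/-- A real polynomial function `∑ aⱼ tʲ + ∑ bⱼ t^{n+1+j}` that vanishes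
identically has all coefficients zero. -/
lemma aux_poly_coeffs (n m : ℕ) (a : Fin (n + 1) → ℝ) (b : Fin m → ℝ)
    (H : ∀ t : ℝ, (∑ j : Fin (n + 1), t ^ (j : ℕ) * a j) +
        ∑ j : Fin m, t ^ (n + 1 + (j : ℕ)) * b j = 0) :
    (∀ j, a j = 0) ∧ ∀ j, b j = 0 := by
  set p : Polynomial ℝ := (∑ j : Fin (n + 1), Polynomial.monomial (j : ℕ) (a j)) +
      ∑ j : Fin m, Polynomial.monomial (n + 1 + (j : ℕ)) (b j) with hp
  have hp0 : p = 0 := by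
    apply Polynomial.funext
    intro t
    simpa [p, Polynomial.eval_finset_sum, Polynomial.eval_monomial, mul_comm] using H t
  constructor
  · intro j
    have hc := congrArg (fun q => Polynomial.coeff q (j : ℕ)) hp0
    have h1 : (∑ j' : Fin (n + 1), Polynomial.monomial (j' : ℕ) (a j')).coeff (j : ℕ) = a j := by
      rw [Polynomial.finset_sum_coeff, Finset.sum_eq_single j]
      · simp [Polynomial.coeff_monomial]
      · intro k _ hk
        rw [Polynomial.coeff_monomial, if_neg (fun hcond => hk (Fin.val_injective hcond))]
      · simp
    have h2 : (∑ j' : Fin m, Polynomial.monomial (n + 1 + (j' : ℕ)) (b j')).coeff (j : ℕ) = 0 := by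
      rw [Polynomial.finset_sum_coeff]
      apply Finset.sum_eq_zero
      intro k _
      rw [Polynomial.coeff_monomial, if_neg]
      have := j.isLt
      omega
    simpa [p, Polynomial.coeff_add, h1, h2] using hc
  · intro j
    have hc := congrArg (fun q => Polynomial.coeff q (n + 1 + (j : ℕ))) hp0
    have h1 : (∑ j' : Fin (n + 1), Polynomial.monomial (j' : ℕ) (a j')).coeff
        (n + 1 + (j : ℕ)) = 0 := by
      rw [Polynomial.finset_sum_coeff]
      apply Finset.sum_eq_zero
      intro k _
      rw [Polynomial.coeff_monomial, if_neg]
      have := k.isLt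
      omega
    have h2 : (∑ j' : Fin m, Polynomial.monomial (n + 1 + (j' : ℕ)) (b j')).coeff
        (n + 1 + (j : ℕ)) = b j := by
      rw [Polynomial.finset_sum_coeff, Finset.sum_eq_single j]
      · simp [Polynomial.coeff_monomial]
      · intro k _ hk
        rw [Polynomial.coeff_monomial, if_neg]
        intro hcond
        exact hk (Fin.val_injective (by omega))
      · simp
    simpa [p, Polynomial.coeff_add, h1, h2] using hc

/-- Theorem 1 (necessary and sufficient observability condition).  Let the
relative trajectory be `s(t) = s₀ + s₁ t + ⋯ + sₙ tⁿ + h(t)` where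
`h(t) = Σ_{j≥1} d_j t^{n+j}` is the observer's higher-order motion.  The pair
(polynomial coefficients `s₀,…,sₙ`, scale `ℓ > 0`) is uniquely determined by
the bearing function `g(t) = s(t)/‖s(t)‖` and the angle function
`θ(t) = ℓ/‖s(t)‖` if and only if `h ≢ 0`. -/
theorem bearing_angle_observability_iff
    (n m : ℕ) (d : Fin m → EuclideanSpace ℝ (Fin 3))
    (h : ℝ → EuclideanSpace ℝ (Fin 3))
    (hh : ∀ t, h t = ∑ j : Fin m, t ^ (n + 1 + (j : ℕ)) • d j) :
    (∀ (s s' : Fin (n + 1) → EuclideanSpace ℝ (Fin 3)) (ℓ ℓ' : ℝ),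
        0 < ℓ → 0 < ℓ' →
        (∀ t, (∑ j : Fin (n + 1), t ^ (j : ℕ) • s j) + h t ≠ 0) →
        (∀ t, (∑ j : Fin (n + 1), t ^ (j : ℕ) • s' j) + h t ≠ 0) →
        (∀ t, ‖(∑ j : Fin (n + 1), t ^ (j : ℕ) • s j) + h t‖⁻¹ •
              ((∑ j : Fin (n + 1), t ^ (j : ℕ) • s j) + h t) =
            ‖(∑ j : Fin (n + 1), t ^ (j : ℕ) • s' j) + h t‖⁻¹ •
              ((∑ j : Fin (n + 1), t ^ (j : ℕ) • s' j) + h t)) →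
        (∀ t, ℓ / ‖(∑ j : Fin (n + 1), t ^ (j : ℕ) • s j) + h t‖ =
            ℓ' / ‖(∑ j : Fin (n + 1), t ^ (j : ℕ) • s' j) + h t‖) →
        s = s' ∧ ℓ = ℓ') ↔
      h ≠ 0 := by
  constructor
  · -- uniqueness → h ≠ 0 : by contradiction, scaling counterexample when h = 0
    intro Huniq h0
    set e : EuclideanSpace ℝ (Fin 3) := EuclideanSpace.single (0 : Fin 3) (1 : ℝ) with he
    have hne : ‖e‖ = 1 := by simp [he]
    have he0 : e ≠ 0 := by
      intro hc
      rw [hc] at hne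
      simp at hne
    set s : Fin (n + 1) → EuclideanSpace ℝ (Fin 3) :=
      fun j => if j = 0 then e else 0 with hs
    set s' : Fin (n + 1) → EuclideanSpace ℝ (Fin 3) :=
      fun j => if j = 0 then (2 : ℝ) • e else 0 with hs'
    have hsum : ∀ t : ℝ, (∑ j : Fin (n + 1), t ^ (j : ℕ) • s j) = e := by
      intro t
      rw [Finset.sum_eq_single (0 : Fin (n + 1))]
      · simp [hs]
      · intro k _ hk
        simp [hs, hk]
      · simp
    have hsum' : ∀ t : ℝ, (∑ j : Fin (n + 1), t ^ (j : ℕ) • s' j) = (2 : ℝ) • e := by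
      intro t
      rw [Finset.sum_eq_single (0 : Fin (n + 1))]
      · simp [hs']
      · intro k _ hk
        simp [hs', hk]
      · simp
    have hzero : ∀ t, h t = 0 := fun t => by rw [h0]; rfl
    have h2e : ‖(2 : ℝ) • e‖ = 2 := by
      rw [norm_smul, hne]
      norm_num
    have := Huniq s s' 1 2 one_pos two_pos
      (fun t => by rw [hsum, hzero]; simpa using he0)
      (fun t => by
        rw [hsum', hzero, add_zero]
        exact smul_ne_zero two_ne_zero he0)
      (fun t => by
        rw [hsum, hsum', hzero, add_zero, add_zero, hne, h2e, smul_smul]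
        norm_num)
      (fun t => by rw [hsum, hsum', hzero, add_zero, add_zero, hne, h2e]; norm_num)
    exact absurd this.2 (by norm_num)
  · -- h ≠ 0 → uniqueness
    intro hne s s' ℓ ℓ' hℓ hℓ' hs hs' hg hθ
    set c : ℝ := ℓ' / ℓ with hcdef
    -- Step 1: pointwise, S'(t) = c • S(t)
    have hc : ∀ t, (∑ j : Fin (n + 1), t ^ (j : ℕ) • s' j) + h t =
        c • ((∑ j : Fin (n + 1), t ^ (j : ℕ) • s j) + h t) := by
      intro t
      set u := (∑ j : Fin (n + 1), t ^ (j : ℕ) • s j) + h t with hu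
      set v := (∑ j : Fin (n + 1), t ^ (j : ℕ) • s' j) + h t with hv
      have hnu : ‖u‖ ≠ 0 := norm_ne_zero_iff.mpr (hs t)
      have hnv : ‖v‖ ≠ 0 := norm_ne_zero_iff.mpr (hs' t)
      have e1 : ‖u‖⁻¹ • u = ‖v‖⁻¹ • v := hg t
      have e2 : ℓ / ‖u‖ = ℓ' / ‖v‖ := hθ t
      have hv2 : v = (‖v‖ * ‖u‖⁻¹) • u := by
        have := congrArg (fun x => ‖v‖ • x) e1
        simp only [smul_smul, mul_inv_cancel₀ hnv, one_smul] at this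
        exact this.symm
      have hval : ‖v‖ * ‖u‖⁻¹ = c := by
        rw [hcdef]
        field_simp at e2 ⊢
        nlinarith [e2]
      rw [hv2, hval]
    -- Step 2: coordinatewise polynomial identity
    have key : ∀ i : Fin 3,
        (∀ j : Fin (n + 1), s' j i - c * s j i = 0) ∧
        ∀ j : Fin m, (1 - c) * d j i = 0 := by
      intro i
      apply aux_poly_coeffs
      intro t
      have H := hc t
      rw [hh t] at H
      have hproj := congrArg (EuclideanSpace.proj (𝕜 := ℝ) i) H
      simp only [map_add, map_sum, map_smul, PiLp.proj_apply, smul_eq_mul] at hproj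
      have e1 : ∑ j : Fin (n + 1), t ^ (j : ℕ) * (s' j i - c * s j i) =
          (∑ j : Fin (n + 1), t ^ (j : ℕ) * s' j i) -
            c * ∑ j : Fin (n + 1), t ^ (j : ℕ) * s j i := by
        rw [Finset.mul_sum, ← Finset.sum_sub_distrib]
        apply Finset.sum_congr rfl
        intros
        ring
      have e2 : ∑ j : Fin m, t ^ (n + 1 + (j : ℕ)) * ((1 - c) * d j i) =
          (∑ j : Fin m, t ^ (n + 1 + (j : ℕ)) * d j i) -
            c * ∑ j : Fin m, t ^ (n + 1 + (j : ℕ)) * d j i := by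
        rw [Finset.mul_sum, ← Finset.sum_sub_distrib]
        apply Finset.sum_congr rfl
        intros
        ring
      rw [e1, e2]
      linear_combination hproj
    -- Step 3: c = 1, otherwise h would vanish
    have hc1 : c = 1 := by
      by_contra hc1
      apply hne
      have hd0 : ∀ j : Fin m, d j = 0 := by
        intro j
        ext i
        have := (key i).2 j
        rcases mul_eq_zero.mp this with h1 | h2
        · exact absurd (by linarith [h1] : c = 1) hc1
        · exact h2
      funext t
      rw [hh t]
      simp [hd0]
    have hll : ℓ = ℓ' := by
      rw [hcdef] at hc1
      field_simp at hc1
      linarith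
    refine ⟨?_, hll⟩
    funext j
    ext i
    have := (key i).1 j
    rw [hc1] at this
    linarith
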